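/- Let θ ∈ (0,π), F_θ(η) := |η| + cos θ·⟨e,η⟩, and define the capillary Cahn–Hoffman map Ψ(ξ) := (ξ − cos θ·e)/ℓ(ξ). Then Ψ is a bijection from the unit spherical cap C_θ onto the set D_θ := {η ∈ ℝ^{n+1} : F_θ(η) = 1 and ⟨η, E_{n+1}⟩ ≥ cos θ/sin²θ}. Moreover, for every ξ ∈ C_θ one has ℓ(ξ) = F_θ(ξ − cos θ·e). -/
import Mathlib


open MeasureTheory Real Set Filter
open scoped RealInnerProductSpace

noncomputable section

/-- Ambient Euclidean space `ℝ^{n+1}`. -/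
abbrev Amb (n : ℕ) : Type := EuclideanSpace ℝ (Fin (n + 1))

/-- The `(n+1)`-st standard basis vector `E_{n+1}`. -/
def lastBasis (n : ℕ) : Amb n := EuclideanSpace.single (Fin.last n) 1

/-- The vector `e := -E_{n+1}`. -/
def eVec (n : ℕ) : Amb n := -(lastBasis n)

/-- The closed upper half-space `\overline{ℝ^{n+1}_+}`. -/
def upperHalf (n : ℕ) : Set (Amb n) := {x | 0 ≤ x (Fin.last n)}

/-- The boundary hyperplane `∂ℝ^{n+1}_+`. -/
def hyperplane (n : ℕ) : Set (Amb n) := {x | x (Fin.last n) = 0}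

/-- `ℓ(x) := sin²θ + cos θ · ⟨x, e⟩`. -/
def ell (n : ℕ) (θ : ℝ) (x : Amb n) : ℝ := sin θ ^ 2 + cos θ * ⟪x, eVec n⟫

/-- The unit spherical cap `C_θ`. -/
def capSphere (n : ℕ) (θ : ℝ) : Set (Amb n) :=
  {ξ | ξ ∈ upperHalf n ∧ ‖ξ - cos θ • eVec n‖ = 1}

/-- The unit spherical cap body `Ĉ_θ`. -/
def capBodyUnit (n : ℕ) (θ : ℝ) : Set (Amb n) :=
  {x | x ∈ upperHalf n ∧ ‖x - cos θ • eVec n‖ ≤ 1}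

/-- A capillary convex body: a compact convex subset of the closed upper half-space with
nonempty interior, whose flat part `K_f` has nonempty interior relative to the boundary
hyperplane and whose curved boundary `K_u` is nonempty. -/
structure IsCapillaryBody (n : ℕ) (K : Set (Amb n)) : Prop where
  compact : IsCompact K
  convex : Convex ℝ K
  subset_upper : K ⊆ upperHalf n
  interior_nonempty : (interior K).Nonempty
  flat_relint_nonempty : (intrinsicInterior ℝ (K ∩ hyperplane n)).Nonempty
  curved_nonempty : (frontier K ∩ {x | 0 < x (Fin.last n)}).Nonempty

/-- Normal cone (of unit normal vectors) of `K` at `x`. -/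
def normalCone (n : ℕ) (K : Set (Amb n)) (x : Amb n) : Set (Amb n) :=
  {ζ | ‖ζ‖ = 1 ∧ ∀ y ∈ K, ⟪ζ, y - x⟫ ≤ 0}

/-- A `θ`-capillary convex body: a capillary convex body with contact angle at most `θ`
along the relative boundary of its flat part. -/
def IsThetaCapillary (n : ℕ) (θ : ℝ) (K : Set (Amb n)) : Prop :=
  IsCapillaryBody n K ∧
    ∀ x ∈ intrinsicFrontier ℝ (K ∩ hyperplane n),
      cos θ ≤ sSup ((fun ζ => ⟪ζ, lastBasis n⟫) '' normalCone n K x)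

/-- Support function `h_z(ξ) := max_{y ∈ K} ⟨ξ - cos θ · e, y - z⟩`. -/
def suppFn (n : ℕ) (θ : ℝ) (K : Set (Amb n)) (z ξ : Amb n) : ℝ :=
  sSup ((fun y => ⟪ξ - cos θ • eVec n, y - z⟫) '' K)

/-- Capillary support function `u_z := h_z / ℓ`. -/
def capSupp (n : ℕ) (θ : ℝ) (K : Set (Amb n)) (z ξ : Amb n) : ℝ :=
  suppFn n θ K z ξ / ell n θ ξ

/-- Capillary polar body `K*_z`. -/
def capPolar (n : ℕ) (θ : ℝ) (K : Set (Amb n)) (z : Amb n) : Set (Amb n) :=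
  {x | ∃ r : ℝ, 0 ≤ r ∧ ∃ ξ ∈ capSphere n θ, x = z + r • ξ ∧ r * capSupp n θ K z ξ ≤ 1}

/-- Capillary area `ω_θ := ∫_{C_θ} ℓ dσ` of `C_θ` (surface measure = `n`-dimensional
Hausdorff measure). -/
def omegaTheta (n : ℕ) (θ : ℝ) : ℝ := ∫ ξ in capSphere n θ, ell n θ ξ ∂μH[(n : ℝ)]

/-- `ℰ_θ(K, z) := (1/ω_θ) ∫_{C_θ} log(u_z) ℓ dσ`. -/
def entropyAt (n : ℕ) (θ : ℝ) (K : Set (Amb n)) (z : Amb n) : ℝ :=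
  (1 / omegaTheta n θ) *
    ∫ ξ in capSphere n θ, Real.log (capSupp n θ K z ξ) * ell n θ ξ ∂μH[(n : ℝ)]

/-- Capillary entropy `ℰ_θ(K)`: supremum of `ℰ_θ(K, z)` over `z` in the relative interior
of the flat part `K_f`. -/
def capEntropy (n : ℕ) (θ : ℝ) (K : Set (Amb n)) : ℝ :=
  sSup (entropyAt n θ K '' intrinsicInterior ℝ (K ∩ hyperplane n))

/-- The spherical cap body `Ĉ_{r,θ}(x₀)`. -/
def capBodyAt (n : ℕ) (θ r : ℝ) (x₀ : Amb n) : Set (Amb n) :=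
  {x | x ∈ upperHalf n ∧ ‖x - (x₀ + (r * cos θ) • eVec n)‖ ≤ r}

/-- Capillary inner radius `ρ₋(K, θ)`. -/
def capInRadius (n : ℕ) (θ : ℝ) (K : Set (Amb n)) : ℝ :=
  sSup {r : ℝ | 0 < r ∧ ∃ x₀ ∈ hyperplane n, capBodyAt n θ r x₀ ⊆ K}

/-- Capillary outer radius `ρ₊(K, θ)`. -/
def capOutRadius (n : ℕ) (θ : ℝ) (K : Set (Amb n)) : ℝ :=
  sInf {r : ℝ | 0 < r ∧ ∃ x₀ ∈ hyperplane n, K ⊆ capBodyAt n θ r x₀}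

/-- Classical inner radius `ρ₋(K)`. -/
def inRadius (n : ℕ) (K : Set (Amb n)) : ℝ :=
  sSup {ρ : ℝ | 0 < ρ ∧ ∃ x₀ ∈ hyperplane n, Metric.ball x₀ ρ ∩ upperHalf n ⊆ K}

/-- Classical outer radius `ρ₊(K)`. -/
def outRadius (n : ℕ) (K : Set (Amb n)) : ℝ :=
  sInf {ρ : ℝ | 0 < ρ ∧ ∃ x₀ ∈ hyperplane n, K ⊆ Metric.ball x₀ ρ}

/-- Dual capillary gauge function `F_θ^∘`. -/
def Fdual (n : ℕ) (θ : ℝ) (x : Amb n) : ℝ :=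
  (1 / sin θ) *
    (Real.sqrt (‖x‖ ^ 2 + (cos θ / sin θ) ^ 2 * ⟪eVec n, x⟫ ^ 2) -
      (cos θ / sin θ) * ⟪eVec n, x⟫)

/-- Capillary gauge function `F_θ(η) := |η| + cos θ · ⟨e, η⟩`. -/
def Fgauge (n : ℕ) (θ : ℝ) (η : Amb n) : ℝ := ‖η‖ + cos θ * ⟪eVec n, η⟫

/-- Capillary Cahn–Hoffman map `Ψ(ξ) := (ξ - cos θ · e)/ℓ(ξ)`. -/
def cahnHoffman (n : ℕ) (θ : ℝ) (ξ : Amb n) : Amb n :=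
  (ell n θ ξ)⁻¹ • (ξ - cos θ • eVec n)

/-- The ellipsoid portion `D_θ`. -/
def Dtheta (n : ℕ) (θ : ℝ) : Set (Amb n) :=
  {η | Fgauge n θ η = 1 ∧ cos θ / sin θ ^ 2 ≤ ⟪η, lastBasis n⟫}

/-- Reflection across the boundary hyperplane `∂ℝ^{n+1}_+`. -/
def reflect (n : ℕ) (x : Amb n) : Amb n :=
  x - (2 * ⟪x, lastBasis n⟫) • lastBasis n

lemma norm_eVec' (n : ℕ) : ‖eVec n‖ = 1 := by
  simp [eVec, lastBasis, EuclideanSpace.norm_single]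

lemma inner_lastBasis' (n : ℕ) (x : Amb n) : ⟪x, lastBasis n⟫ = x (Fin.last n) := by
  simp [lastBasis, EuclideanSpace.inner_single_right]

lemma inner_eVec_self' (n : ℕ) : ⟪eVec n, eVec n⟫ = 1 := by
  have := norm_eVec' n
  rw [real_inner_self_eq_norm_sq, this]; norm_num

lemma inner_eVec_lastBasis (n : ℕ) : ⟪eVec n, lastBasis n⟫ = -1 := by
  rw [eVec, inner_neg_left, inner_lastBasis', lastBasis]
  simp

lemma ell_eq_F_of_norm (n : ℕ) (θ : ℝ) (ξ : Amb n)
    (hξ : ‖ξ - cos θ • eVec n‖ = 1) :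
    ell n θ ξ = Fgauge n θ (ξ - cos θ • eVec n) := by
  have h1 : ⟪eVec n, ξ - cos θ • eVec n⟫ = ⟪ξ, eVec n⟫ - cos θ := by
    rw [inner_sub_right, real_inner_smul_right, inner_eVec_self' n,
      real_inner_comm (eVec n) ξ]; ring
  rw [Fgauge, hξ, h1, ell]
  linear_combination sin_sq_add_cos_sq θ

lemma ell_pos' (n : ℕ) (θ : ℝ) (hθ : θ ∈ Set.Ioo 0 π) (ξ : Amb n)
    (hξ : ‖ξ - cos θ • eVec n‖ = 1) : 0 < ell n θ ξ := by
  set t := ⟪ξ - cos θ • eVec n, eVec n⟫ with ht_def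
  have ht : |t| ≤ 1 := by
    calc |t| ≤ ‖ξ - cos θ • eVec n‖ * ‖eVec n‖ := abs_real_inner_le_norm _ _
    _ = 1 := by rw [hξ, norm_eVec' n]; ring
  have h2 : t = ⟪ξ, eVec n⟫ - cos θ := by
    rw [ht_def, inner_sub_left, real_inner_smul_left, inner_eVec_self' n]; ring
  have hsin : 0 < sin θ := Real.sin_pos_of_pos_of_lt_pi hθ.1 hθ.2
  have h3 := abs_le.mp ht
  have h4 : ⟪ξ, eVec n⟫ = t + cos θ := by linarith
  rw [ell, h4]
  nlinarith [sin_sq_add_cos_sq θ, sq_nonneg (cos θ + t), sq_nonneg (cos θ - t),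
    mul_pos hsin hsin, h3.1, h3.2]

theorem stmt_2 (n : ℕ) (hn : 1 ≤ n) (θ : ℝ) (hθ : θ ∈ Set.Ioo 0 π) :
    Set.BijOn (cahnHoffman n θ) (capSphere n θ) (Dtheta n θ) ∧
    ∀ ξ ∈ capSphere n θ, ell n θ ξ = Fgauge n θ (ξ - cos θ • eVec n) := by
  have hsin : 0 < sin θ := Real.sin_pos_of_pos_of_lt_pi hθ.1 hθ.2
  have hsin2 : 0 < sin θ ^ 2 := by positivity
  refine ⟨?_, fun ξ hξ => ell_eq_F_of_norm n θ ξ hξ.2⟩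
  -- maps to
  have hmaps : Set.MapsTo (cahnHoffman n θ) (capSphere n θ) (Dtheta n θ) := by
    rintro ξ ⟨hup, hnorm⟩
    have hl : 0 < ell n θ ξ := ell_pos' n θ hθ ξ hnorm
    have hFν : Fgauge n θ (ξ - cos θ • eVec n) = ell n θ ξ :=
      (ell_eq_F_of_norm n θ ξ hnorm).symm
    have hx : 0 ≤ ⟪ξ, lastBasis n⟫ := by rw [inner_lastBasis']; exact hup
    constructor
    · have hscale : Fgauge n θ ((ell n θ ξ)⁻¹ • (ξ - cos θ • eVec n)) =
          (ell n θ ξ)⁻¹ * Fgauge n θ (ξ - cos θ • eVec n) := by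
        rw [Fgauge, Fgauge, norm_smul, real_inner_smul_right, Real.norm_eq_abs,
          abs_of_pos (inv_pos.mpr hl)]
        ring
      show Fgauge n θ ((ell n θ ξ)⁻¹ • (ξ - cos θ • eVec n)) = 1
      rw [hscale, hFν, inv_mul_cancel₀ hl.ne']
    · have hνl : ⟪ξ - cos θ • eVec n, lastBasis n⟫ = ⟪ξ, lastBasis n⟫ + cos θ := by
        rw [inner_sub_left, real_inner_smul_left, inner_eVec_lastBasis]; ring
      have hell : ell n θ ξ = sin θ ^ 2 - cos θ * ⟪ξ, lastBasis n⟫ := by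
        rw [ell, eVec, inner_neg_right, inner_lastBasis']; ring
      show cos θ / sin θ ^ 2 ≤ ⟪(ell n θ ξ)⁻¹ • (ξ - cos θ • eVec n), lastBasis n⟫
      rw [real_inner_smul_left, hνl, inv_mul_eq_div, div_le_div_iff₀ hsin2 hl, hell]
      nlinarith [hx, sin_sq_add_cos_sq θ, mul_nonneg hx (sq_nonneg (sin θ)),
        mul_nonneg hx (sq_nonneg (cos θ))]
  -- left inverse
  have hleft : ∀ ξ ∈ capSphere n θ,
      cos θ • eVec n + ‖cahnHoffman n θ ξ‖⁻¹ • cahnHoffman n θ ξ = ξ := by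
    rintro ξ ⟨hup, hnorm⟩
    have hl : 0 < ell n θ ξ := ell_pos' n θ hθ ξ hnorm
    have hnΨ : ‖cahnHoffman n θ ξ‖ = (ell n θ ξ)⁻¹ := by
      rw [cahnHoffman, norm_smul, hnorm, Real.norm_eq_abs, abs_of_pos (inv_pos.mpr hl)]
      ring
    rw [hnΨ, inv_inv, cahnHoffman, smul_smul, mul_inv_cancel₀ hl.ne', one_smul]
    abel
  have hinj : Set.InjOn (cahnHoffman n θ) (capSphere n θ) := by
    intro ξ₁ h1 ξ₂ h2 heq
    rw [← hleft ξ₁ h1, ← hleft ξ₂ h2, heq]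
  -- surjectivity
  have hsurj : Set.SurjOn (cahnHoffman n θ) (capSphere n θ) (Dtheta n θ) := by
    rintro η ⟨hF1, hF2⟩
    have hη0 : η ≠ 0 := by
      intro h
      rw [h] at hF1
      simp [Fgauge] at hF1
    have hnpos : 0 < ‖η‖ := norm_pos_iff.mpr hη0
    have hel : ⟪eVec n, η⟫ = -⟪η, lastBasis n⟫ := by
      rw [real_inner_comm, eVec, inner_neg_right]
    have hnormη : ‖η‖ = 1 + cos θ * ⟪η, lastBasis n⟫ := by
      have h := hF1
      rw [Fgauge, hel] at h
      linarith
    set ξ := cos θ • eVec n + ‖η‖⁻¹ • η with hξdef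
    have hsub : ξ - cos θ • eVec n = ‖η‖⁻¹ • η := by rw [hξdef]; abel
    have hnν : ‖ξ - cos θ • eVec n‖ = 1 := by
      rw [hsub, norm_smul, Real.norm_eq_abs, abs_of_pos (inv_pos.mpr hnpos),
        inv_mul_cancel₀ hnpos.ne']
    have hy : cos θ ≤ ⟪η, lastBasis n⟫ * sin θ ^ 2 := (div_le_iff₀ hsin2).mp hF2
    have key : cos θ * ‖η‖ ≤ ⟪η, lastBasis n⟫ := by
      rw [hnormη]
      have expand : cos θ * (1 + cos θ * ⟪η, lastBasis n⟫) =
          cos θ + ⟪η, lastBasis n⟫ - sin θ ^ 2 * ⟪η, lastBasis n⟫ := by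
        linear_combination ⟪η, lastBasis n⟫ * sin_sq_add_cos_sq θ
      rw [expand]
      linarith
    have hup : ξ ∈ upperHalf n := by
      show 0 ≤ ξ (Fin.last n)
      have h0 : ⟪ξ, lastBasis n⟫ = ξ (Fin.last n) := inner_lastBasis' n ξ
      rw [← h0]
      have hcoord : ⟪ξ, lastBasis n⟫ = -cos θ + ‖η‖⁻¹ * ⟪η, lastBasis n⟫ := by
        rw [hξdef, inner_add_left, real_inner_smul_left, real_inner_smul_left,
          inner_eVec_lastBasis]
        ring
      rw [hcoord, inv_mul_eq_div]
      have := (le_div_iff₀ hnpos).mpr key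
      linarith
    have hFscale : Fgauge n θ (‖η‖⁻¹ • η) = ‖η‖⁻¹ * Fgauge n θ η := by
      rw [Fgauge, Fgauge, norm_smul, real_inner_smul_right, Real.norm_eq_abs,
        abs_of_pos (inv_pos.mpr hnpos)]
      ring
    have hell : ell n θ ξ = ‖η‖⁻¹ := by
      rw [ell_eq_F_of_norm n θ ξ hnν, hsub, hFscale, hF1, mul_one]
    refine ⟨ξ, ⟨hup, hnν⟩, ?_⟩
    rw [cahnHoffman, hsub, hell, inv_inv, smul_smul, mul_inv_cancel₀ hnpos.ne', one_smul]
  exact ⟨hmaps, hinj, hsurj⟩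

end
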